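/- Fix positive reals χ₁, χ₂, d₃, k, l, ω, a₀, b₀ and reals a₁, a₂, a₃, a₄, b₁, b₂, b₃, b₄. Let T ∈ (0,∞] and let ū, u̲, v̄, v̲ : [0,T) → ℝ be differentiable functions solving the comparison ODE system (given in the context) on [0,T) with nonnegative initial values satisfying ū(0) ≥ u̲(0) ≥ 0 and v̄(0) ≥ v̲(0) ≥ 0. Then for all t ∈ [0,T): 0 ≤ u̲(t) ≤ ū(t) and 0 ≤ v̲(t) ≤ v̄(t). -/

import Mathlib

open Set Filter

lemma sqmin_hasDerivAt (x : ℝ) :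
    HasDerivAt (fun y : ℝ => (min y 0)^2) (2 * min x 0) x := by
  rcases lt_trichotomy x 0 with hx | hx | hx
  · have h : (fun y : ℝ => (min y 0)^2) =ᶠ[nhds x] (fun y : ℝ => y^2) := by
      filter_upwards [eventually_lt_nhds hx] with y hy
      rw [min_eq_left hy.le]
    have h2 := hasDerivAt_pow 2 x
    have : HasDerivAt (fun y : ℝ => y^2) (2 * min x 0) x := by
      refine h2.congr_deriv ?_
      rw [min_eq_left hx.le]; push_cast; ring
    exact this.congr_of_eventuallyEq h
  · subst hx
    rw [hasDerivAt_iff_tendsto_slope]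
    have hb : ∀ y : ℝ, ‖slope (fun y : ℝ => (min y 0)^2) 0 y‖ ≤ ‖y‖ := by
      intro y
      rcases eq_or_ne y 0 with rfl | hy
      · simp [slope]
      · have : slope (fun y : ℝ => (min y 0)^2) 0 y = (min y 0)^2 / y := by
          simp [slope, sub_zero, div_eq_inv_mul]
        rw [this, norm_div]
        have h0 : |min y 0| ≤ |y| := by
          rcases le_total y 0 with h | h
          · rw [min_eq_left h]
          · rw [min_eq_right h]; simpa using abs_nonneg y
        have h1 : ‖(min y 0)^2‖ ≤ ‖y^2‖ := by
          rw [Real.norm_eq_abs, Real.norm_eq_abs, abs_pow, abs_pow]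
          exact pow_le_pow_left₀ (abs_nonneg _) h0 2
        calc ‖(min y 0)^2‖ / ‖y‖ ≤ ‖y^2‖ / ‖y‖ := by gcongr
          _ = ‖y‖ := by rw [pow_two, norm_mul, mul_div_assoc, div_self (by simpa using hy), mul_one]
    have : Tendsto (fun y : ℝ => ‖y‖) (nhdsWithin 0 {(0:ℝ)}ᶜ) (nhds 0) := by
      have := (continuous_norm.tendsto (0:ℝ)).mono_left (nhdsWithin_le_nhds (s := {(0:ℝ)}ᶜ))
      simpa using this
    simpa using squeeze_zero_norm hb this
  · have h : (fun y : ℝ => (min y 0)^2) =ᶠ[nhds x] (fun _ : ℝ => (0:ℝ)) := by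
      filter_upwards [eventually_gt_nhds hx] with y hy
      rw [min_eq_right hy.le]; norm_num
    have : HasDerivAt (fun _ : ℝ => (0:ℝ)) (2 * min x 0) x := by
      have := hasDerivAt_const x (0:ℝ)
      refine this.congr_deriv ?_
      rw [min_eq_right hx.le]; ring
    exact this.congr_of_eventuallyEq h

lemma pair_nonneg {b : ℝ} {f g f' g' A B C D : ℝ → ℝ}
    (hf : ∀ s ∈ Icc (0:ℝ) b, HasDerivWithinAt f (f' s) (Icc 0 b) s)
    (hg : ∀ s ∈ Icc (0:ℝ) b, HasDerivWithinAt g (g' s) (Icc 0 b) s)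
    (hfeq : ∀ s ∈ Icc (0:ℝ) b, f' s = A s * f s + B s * g s)
    (hgeq : ∀ s ∈ Icc (0:ℝ) b, g' s = C s * g s + D s * f s)
    (hBpos : ∀ s ∈ Icc (0:ℝ) b, 0 ≤ B s)
    (hDpos : ∀ s ∈ Icc (0:ℝ) b, 0 ≤ D s)
    (hA : ContinuousOn A (Icc 0 b)) (hB : ContinuousOn B (Icc 0 b))
    (hC : ContinuousOn C (Icc 0 b)) (hD : ContinuousOn D (Icc 0 b))
    (hf0 : 0 ≤ f 0) (hg0 : 0 ≤ g 0) :
    ∀ s ∈ Icc (0:ℝ) b, 0 ≤ f s ∧ 0 ≤ g s := by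
  -- bound on coefficients
  obtain ⟨K0, hK0⟩ := isCompact_Icc.exists_bound_of_continuousOn
    ((hA.abs.add hB.abs).add (hC.abs.add hD.abs))
  set K : ℝ := max K0 0 with hKdef
  have hK : 0 ≤ K := le_max_right _ _
  have hbound : ∀ s ∈ Icc (0:ℝ) b, |A s| ≤ K ∧ B s ≤ K ∧ |C s| ≤ K ∧ D s ≤ K := by
    intro s hs
    have h := hK0 s hs
    have habs : |A s| + |B s| + (|C s| + |D s|) ≤ K := by
      calc |A s| + |B s| + (|C s| + |D s|)
          ≤ ‖|A s| + |B s| + (|C s| + |D s|)‖ := le_abs_self _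
        _ ≤ K0 := h
        _ ≤ K := le_max_left _ _
    have hA' := abs_nonneg (A s); have hB' := abs_nonneg (B s)
    have hC' := abs_nonneg (C s); have hD' := abs_nonneg (D s)
    refine ⟨by linarith, le_trans (le_abs_self _) (by linarith), by linarith,
      le_trans (le_abs_self _) (by linarith)⟩
  -- H and its derivative
  have hH : ∀ s ∈ Icc (0:ℝ) b,
      HasDerivWithinAt (fun y => (min (f y) 0)^2 + (min (g y) 0)^2)
        (2 * min (f s) 0 * f' s + 2 * min (g s) 0 * g' s) (Icc 0 b) s := by
    intro s hs
    exact ((sqmin_hasDerivAt (f s)).comp_hasDerivWithinAt s (hf s hs)).add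
      ((sqmin_hasDerivAt (g s)).comp_hasDerivWithinAt s (hg s hs))
  have key : ∀ s ∈ Icc (0:ℝ) b,
      2 * min (f s) 0 * f' s + 2 * min (g s) 0 * g' s
        ≤ 4 * K * ((min (f s) 0)^2 + (min (g s) 0)^2) := by
    intro s hs
    obtain ⟨hAb, hBb, hCb, hDb⟩ := hbound s hs
    rw [hfeq s hs, hgeq s hs]
    set m := min (f s) 0 with hm
    set n := min (g s) 0 with hn
    have hm0 : m ≤ 0 := min_le_right _ _
    have hn0 : n ≤ 0 := min_le_right _ _
    have hmf : m * f s = m^2 := by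
      rcases le_total (f s) 0 with h | h
      · rw [hm, min_eq_left h]; ring
      · rw [hm, min_eq_right h]; ring
    have hng : n * g s = n^2 := by
      rcases le_total (g s) 0 with h | h
      · rw [hn, min_eq_left h]; ring
      · rw [hn, min_eq_right h]; ring
    have hmg : m * g s ≤ m * n := by
      have : n ≤ g s := min_le_left _ _
      nlinarith
    have hnf : n * f s ≤ n * m := by
      have : m ≤ f s := min_le_left _ _
      nlinarith
    have hAK : A s ≤ K := le_of_abs_le hAb
    have hAK' : -K ≤ A s := neg_le_of_abs_le hAb
    have hCK : C s ≤ K := le_of_abs_le hCb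
    have hCK' : -K ≤ C s := neg_le_of_abs_le hCb
    have hBs := hBpos s hs
    have hDs := hDpos s hs
    have hmn : 0 ≤ m * n := by nlinarith
    have h1 : A s * (m * f s) ≤ K * m^2 := by
      rw [hmf]; exact mul_le_mul_of_nonneg_right hAK (sq_nonneg m)
    have h2 : C s * (n * g s) ≤ K * n^2 := by
      rw [hng]; exact mul_le_mul_of_nonneg_right hCK (sq_nonneg n)
    have h3 : B s * (m * g s) ≤ K * (m * n) := by
      calc B s * (m * g s) ≤ B s * (m * n) := mul_le_mul_of_nonneg_left hmg hBs
        _ ≤ K * (m * n) := mul_le_mul_of_nonneg_right hBb hmn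
    have h4 : D s * (n * f s) ≤ K * (m * n) := by
      calc D s * (n * f s) ≤ D s * (n * m) := mul_le_mul_of_nonneg_left hnf hDs
        _ = D s * (m * n) := by ring
        _ ≤ K * (m * n) := mul_le_mul_of_nonneg_right hDb hmn
    have hsq : 2 * (m * n) ≤ m^2 + n^2 := by nlinarith [sq_nonneg (m - n)]
    nlinarith [sq_nonneg m, sq_nonneg n]
  -- G = H * exp(-4K s) is antitone
  set M : ℝ := 4 * K with hM
  have hexp : ∀ s : ℝ, HasDerivAt (fun y : ℝ => Real.exp (-M * y))
      (Real.exp (-M * s) * (-M)) s := by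
    intro s
    have h1 : HasDerivAt (fun y : ℝ => -M * y) (-M) s := by
      simpa using (hasDerivAt_id s).const_mul (-M)
    simpa using h1.exp
  have hG : ∀ s ∈ Icc (0:ℝ) b,
      HasDerivWithinAt (fun y => ((min (f y) 0)^2 + (min (g y) 0)^2) * Real.exp (-M * y))
        ((2 * min (f s) 0 * f' s + 2 * min (g s) 0 * g' s) * Real.exp (-M * s)
          + ((min (f s) 0)^2 + (min (g s) 0)^2) * (Real.exp (-M * s) * (-M))) (Icc 0 b) s := by
    intro s hs
    exact (hH s hs).mul ((hexp s).hasDerivWithinAt)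
  have hanti : AntitoneOn (fun y => ((min (f y) 0)^2 + (min (g y) 0)^2) * Real.exp (-M * y))
      (Icc (0:ℝ) b) := by
    apply antitoneOn_of_deriv_nonpos (convex_Icc 0 b)
    · exact fun s hs => (hG s hs).continuousWithinAt
    · intro s hs
      rw [interior_Icc] at hs
      exact ((hG s (Ioo_subset_Icc_self hs)).hasDerivAt
        (Icc_mem_nhds hs.1 hs.2)).differentiableAt.differentiableWithinAt
    · intro s hs
      rw [interior_Icc] at hs
      have hds := (hG s (Ioo_subset_Icc_self hs)).hasDerivAt (Icc_mem_nhds hs.1 hs.2)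
      rw [hds.deriv]
      have hk := key s (Ioo_subset_Icc_self hs)
      have he : 0 < Real.exp (-M * s) := Real.exp_pos _
      have hHnn : 0 ≤ (min (f s) 0)^2 + (min (g s) 0)^2 := by positivity
      nlinarith
  intro s hs
  have h0mem : (0:ℝ) ∈ Icc (0:ℝ) b := ⟨le_refl _, le_trans hs.1 hs.2⟩
  have hG0 : ((min (f 0) 0)^2 + (min (g 0) 0)^2) * Real.exp (-M * 0) = 0 := by
    rw [min_eq_right hf0, min_eq_right hg0]; norm_num
  have hle : ((min (f s) 0)^2 + (min (g s) 0)^2) * Real.exp (-M * s) ≤ 0 := by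
    have := hanti h0mem hs hs.1
    simp only at this
    rw [hG0] at this
    exact this
  have he : 0 < Real.exp (-M * s) := Real.exp_pos _
  have hfs : (min (f s) 0)^2 = 0 ∧ (min (g s) 0)^2 = 0 := by
    constructor <;> nlinarith [sq_nonneg (min (f s) 0), sq_nonneg (min (g s) 0)]
  have hf' : min (f s) 0 = 0 := by
    have h := hfs.1
    have : |min (f s) 0| = 0 := by rw [← Real.sqrt_sq_eq_abs, h, Real.sqrt_zero]
    exact abs_eq_zero.mp this
  have hg' : min (g s) 0 = 0 := by
    have h := hfs.2
    have : |min (g s) 0| = 0 := by rw [← Real.sqrt_sq_eq_abs, h, Real.sqrt_zero]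
    exact abs_eq_zero.mp this
  exact ⟨min_eq_right_iff.mp hf', min_eq_right_iff.mp hg'⟩
theorem stmt_2 (χ₁ χ₂ d₃ k l ω a₀ b₀ : ℝ)
    (hχ₁ : 0 < χ₁) (hχ₂ : 0 < χ₂) (hd₃ : 0 < d₃) (hk : 0 < k) (hl : 0 < l)
    (hω : 0 < ω) (ha₀ : 0 < a₀) (hb₀ : 0 < b₀)
    (a₁ a₂ a₃ a₄ b₁ b₂ b₃ b₄ : ℝ)
    (T : ENNReal) (hT : 0 < T)
    (S : Set ℝ) (hS : S = {t : ℝ | 0 ≤ t ∧ ENNReal.ofReal t < T})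
    (uo ui vo vi uo' ui' vo' vi' : ℝ → ℝ)
    (huod : ∀ t ∈ S, HasDerivWithinAt uo (uo' t) S t)
    (huid : ∀ t ∈ S, HasDerivWithinAt ui (ui' t) S t)
    (hvod : ∀ t ∈ S, HasDerivWithinAt vo (vo' t) S t)
    (hvid : ∀ t ∈ S, HasDerivWithinAt vi (vi' t) S t)
    (heq1 : ∀ t ∈ S, uo' t =
      (χ₁ / d₃) * uo t * (k * uo t + l * vo t - k * ui t - l * vi t)
      + uo t * (a₀ - (a₁ - ω * max (-a₃) 0) * uo t - ω * max a₃ 0 * ui t)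
      + uo t * ((max (-a₂) 0 + ω * max (-a₄) 0) * vo t
          - (max a₂ 0 + ω * max a₄ 0) * vi t))
    (heq2 : ∀ t ∈ S, ui' t =
      (χ₁ / d₃) * ui t * (k * ui t + l * vi t - k * uo t - l * vo t)
      + ui t * (a₀ - (a₁ - ω * max (-a₃) 0) * ui t - ω * max a₃ 0 * uo t)
      + ui t * ((max (-a₂) 0 + ω * max (-a₄) 0) * vi t
          - (max a₂ 0 + ω * max a₄ 0) * vo t))
    (heq3 : ∀ t ∈ S, vo' t =
      (χ₂ / d₃) * vo t * (k * uo t + l * vo t - k * ui t - l * vi t)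
      + vo t * (b₀ - (b₂ - ω * max (-b₄) 0) * vo t - ω * max b₄ 0 * vi t)
      + vo t * ((max (-b₁) 0 + ω * max (-b₃) 0) * uo t
          - (max b₁ 0 + ω * max b₃ 0) * ui t))
    (heq4 : ∀ t ∈ S, vi' t =
      (χ₂ / d₃) * vi t * (k * ui t + l * vi t - k * uo t - l * vo t)
      + vi t * (b₀ - (b₂ - ω * max (-b₄) 0) * vi t - ω * max b₄ 0 * vo t)
      + vi t * ((max (-b₁) 0 + ω * max (-b₃) 0) * ui t
          - (max b₁ 0 + ω * max b₃ 0) * uo t))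
    (hu0 : 0 ≤ ui 0) (hu00 : ui 0 ≤ uo 0)
    (hv0 : 0 ≤ vi 0) (hv00 : vi 0 ≤ vo 0) :
    ∀ t ∈ S, (0 ≤ ui t ∧ ui t ≤ uo t) ∧ (0 ≤ vi t ∧ vi t ≤ vo t) := by

  intro t ht
  have htS := ht
  rw [hS] at htS
  have hsub : Icc (0:ℝ) t ⊆ S := by
    rw [hS]; rintro s ⟨hs0, hst⟩
    exact ⟨hs0, lt_of_le_of_lt (ENNReal.ofReal_le_ofReal hst) htS.2⟩
  have htI : t ∈ Icc (0:ℝ) t := ⟨htS.1, le_refl t⟩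
  have Huo : ∀ s ∈ Icc (0:ℝ) t, HasDerivWithinAt uo (uo' s) (Icc 0 t) s :=
    fun s hs => (huod s (hsub hs)).mono hsub
  have Hui : ∀ s ∈ Icc (0:ℝ) t, HasDerivWithinAt ui (ui' s) (Icc 0 t) s :=
    fun s hs => (huid s (hsub hs)).mono hsub
  have Hvo : ∀ s ∈ Icc (0:ℝ) t, HasDerivWithinAt vo (vo' s) (Icc 0 t) s :=
    fun s hs => (hvod s (hsub hs)).mono hsub
  have Hvi : ∀ s ∈ Icc (0:ℝ) t, HasDerivWithinAt vi (vi' s) (Icc 0 t) s :=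
    fun s hs => (hvid s (hsub hs)).mono hsub
  have Cuo : ContinuousOn uo (Icc (0:ℝ) t) := fun s hs => (Huo s hs).continuousWithinAt
  have Cui : ContinuousOn ui (Icc (0:ℝ) t) := fun s hs => (Hui s hs).continuousWithinAt
  have Cvo : ContinuousOn vo (Icc (0:ℝ) t) := fun s hs => (Hvo s hs).continuousWithinAt
  have Cvi : ContinuousOn vi (Icc (0:ℝ) t) := fun s hs => (Hvi s hs).continuousWithinAt
  -- Phase 1a : ui, vi nonnegative
  have P1 : ∀ s ∈ Icc (0:ℝ) t, 0 ≤ ui s ∧ 0 ≤ vi s := by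
    refine pair_nonneg (f := ui) (g := vi) (f' := ui') (g' := vi')
      (A := fun s => (χ₁/d₃) * (k * ui s + l * vi s - k * uo s - l * vo s)
        + (a₀ - (a₁ - ω * max (-a₃) 0) * ui s - ω * max a₃ 0 * uo s)
        + ((max (-a₂) 0 + ω * max (-a₄) 0) * vi s - (max a₂ 0 + ω * max a₄ 0) * vo s))
      (B := fun _ => 0)
      (C := fun s => (χ₂/d₃) * (k * ui s + l * vi s - k * uo s - l * vo s)
        + (b₀ - (b₂ - ω * max (-b₄) 0) * vi s - ω * max b₄ 0 * vo s)
        + ((max (-b₁) 0 + ω * max (-b₃) 0) * ui s - (max b₁ 0 + ω * max b₃ 0) * uo s))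
      (D := fun _ => 0)
      Hui Hvi
      (fun s hs => by rw [heq2 s (hsub hs)]; ring)
      (fun s hs => by rw [heq4 s (hsub hs)]; ring)
      (fun s _ => le_refl 0) (fun s _ => le_refl 0)
      (by fun_prop) continuousOn_const (by fun_prop) continuousOn_const hu0 hv0
  -- Phase 1b : uo, vo nonnegative
  have P1b : ∀ s ∈ Icc (0:ℝ) t, 0 ≤ uo s ∧ 0 ≤ vo s := by
    refine pair_nonneg (f := uo) (g := vo) (f' := uo') (g' := vo')
      (A := fun s => (χ₁/d₃) * (k * uo s + l * vo s - k * ui s - l * vi s)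
        + (a₀ - (a₁ - ω * max (-a₃) 0) * uo s - ω * max a₃ 0 * ui s)
        + ((max (-a₂) 0 + ω * max (-a₄) 0) * vo s - (max a₂ 0 + ω * max a₄ 0) * vi s))
      (B := fun _ => 0)
      (C := fun s => (χ₂/d₃) * (k * uo s + l * vo s - k * ui s - l * vi s)
        + (b₀ - (b₂ - ω * max (-b₄) 0) * vo s - ω * max b₄ 0 * vi s)
        + ((max (-b₁) 0 + ω * max (-b₃) 0) * uo s - (max b₁ 0 + ω * max b₃ 0) * ui s))
      (D := fun _ => 0)
      Huo Hvo
      (fun s hs => by rw [heq1 s (hsub hs)]; ring)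
      (fun s hs => by rw [heq3 s (hsub hs)]; ring)
      (fun s _ => le_refl 0) (fun s _ => le_refl 0)
      (by fun_prop) continuousOn_const (by fun_prop) continuousOn_const
      (le_trans hu0 hu00) (le_trans hv0 hv00)
  -- Phase 2 : differences nonnegative
  have P2 : ∀ s ∈ Icc (0:ℝ) t, 0 ≤ uo s - ui s ∧ 0 ≤ vo s - vi s := by
    refine pair_nonneg (f := fun s => uo s - ui s) (g := fun s => vo s - vi s)
      (f' := fun s => uo' s - ui' s) (g' := fun s => vo' s - vi' s)
      (A := fun s => (χ₁/d₃) * k * (uo s + ui s) + a₀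
        - (a₁ - ω * max (-a₃) 0) * (uo s + ui s)
        + (max (-a₂) 0 + ω * max (-a₄) 0) * vo s - (max a₂ 0 + ω * max a₄ 0) * vi s)
      (B := fun s => (χ₁/d₃) * l * (uo s + ui s)
        + (max (-a₂) 0 + ω * max (-a₄) 0 + max a₂ 0 + ω * max a₄ 0) * ui s)
      (C := fun s => (χ₂/d₃) * l * (vo s + vi s) + b₀
        - (b₂ - ω * max (-b₄) 0) * (vo s + vi s)
        + (max (-b₁) 0 + ω * max (-b₃) 0) * uo s - (max b₁ 0 + ω * max b₃ 0) * ui s)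
      (D := fun s => (χ₂/d₃) * k * (vo s + vi s)
        + (max (-b₁) 0 + ω * max (-b₃) 0 + max b₁ 0 + ω * max b₃ 0) * vi s)
      (fun s hs => (Huo s hs).sub (Hui s hs))
      (fun s hs => (Hvo s hs).sub (Hvi s hs))
      (fun s hs => by beta_reduce; rw [heq1 s (hsub hs), heq2 s (hsub hs)]; ring)
      (fun s hs => by beta_reduce; rw [heq3 s (hsub hs), heq4 s (hsub hs)]; ring)
      ?_ ?_ (by fun_prop) (by fun_prop) (by fun_prop) (by fun_prop)
      (sub_nonneg.mpr hu00) (sub_nonneg.mpr hv00)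
    · intro s hs
      have h1 := (P1 s hs).1
      have h2 := (P1b s hs).1
      have hmax : (0:ℝ) ≤ max (-a₂) 0 + ω * max (-a₄) 0 + max a₂ 0 + ω * max a₄ 0 :=
        add_nonneg (add_nonneg (add_nonneg (le_max_right _ _)
          (mul_nonneg hω.le (le_max_right _ _))) (le_max_right _ _))
          (mul_nonneg hω.le (le_max_right _ _))
      have hc : (0:ℝ) ≤ (χ₁/d₃) * l := mul_nonneg (div_nonneg hχ₁.le hd₃.le) hl.le
      exact add_nonneg (mul_nonneg hc (by linarith)) (mul_nonneg hmax h1)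
    · intro s hs
      have h1 := (P1 s hs).2
      have h2 := (P1b s hs).2
      have hmax : (0:ℝ) ≤ max (-b₁) 0 + ω * max (-b₃) 0 + max b₁ 0 + ω * max b₃ 0 :=
        add_nonneg (add_nonneg (add_nonneg (le_max_right _ _)
          (mul_nonneg hω.le (le_max_right _ _))) (le_max_right _ _))
          (mul_nonneg hω.le (le_max_right _ _))
      have hc : (0:ℝ) ≤ (χ₂/d₃) * k := mul_nonneg (div_nonneg hχ₂.le hd₃.le) hk.le
      exact add_nonneg (mul_nonneg hc (by linarith)) (mul_nonneg hmax h1)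
  exact ⟨⟨(P1 t htI).1, sub_nonneg.mp (P2 t htI).1⟩,
    ⟨(P1 t htI).2, sub_nonneg.mp (P2 t htI).2⟩⟩
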